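/- For any θ, θ′ ∈ Θ₊, a G-constellation F is θ-stable if and only if F is θ′-stable; that is, all parameters in the cone Θ₊ determine the same set of stable G-constellations (namely the G-clusters, so that M_θ = G-Hilb for all θ ∈ Θ₊). -/

import Mathlib

/-!
Common setup: `G`-constellations for a finite subgroup `G ⊆ GL(n,ℂ)`.

* `polyAct g` is the action of `g ∈ GL(n,ℂ)` on the polynomial ring
  `A = ℂ[x₁,…,xₙ]` given by `(g·f)(x) = f(g⁻¹·x)`.
* `GMod n G F` is a `G`-equivariant `A`-module structure on the ℂ-vector space `F`:
  an `A`-module structure `actA` (as a ℂ-algebra map `A →ₐ End ℂ F`), a `G`-action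
  `actG` by ℂ-linear automorphisms, and the compatibility `g·(f·v) = (g·f)·(g·v)`.
* `IrrChar G` is the set of irreducible complex characters of `G`.
* `multChar ρ χ` is the multiplicity `m_ρ` read off from a character `χ`,
  `thetaOfChar θ χ = Σ_ρ m_ρ(χ)·θ(ρ)`.
* `IsThetaParam G θ` says `θ ∈ Θ`, i.e. `Σ_ρ (dim ρ)·θ(ρ) = 0`;
  `IsThetaPlus G θ` says `θ ∈ Θ₊`.
* `M.IsSub E` says the ℂ-subspace `E` is a `G`-submodule; `M.subChar E h` is the
  character of the induced `G`-representation on `E`.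
* `M.IsConstellation` : `F` is finite dimensional and isomorphic, as a
  `ℂ[G]`-module, to the regular representation `Map(G,ℂ)`.
* `M.IsStable θ` / `M.IsSemistable θ` : `θ(E) > 0` (resp. `≥ 0`) for every
  `G`-submodule `0 ≠ E ≠ F`.
* `IsGHom M M' φ` : `φ` is simultaneously `A`-linear and `G`-equivariant.
-/

open CategoryTheory

noncomputable section

/-- The action of `g ∈ GL(n,ℂ)` on polynomials, `(g·f)(x) = f(g⁻¹·x)`:
the variable `xᵢ` is replaced by `∑ⱼ (g⁻¹)ᵢⱼ xⱼ`. -/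
def polyAct {n : ℕ} (g : GL (Fin n) ℂ) :
    MvPolynomial (Fin n) ℂ →ₐ[ℂ] MvPolynomial (Fin n) ℂ :=
  MvPolynomial.aeval fun i =>
    ∑ j : Fin n, ((g⁻¹ : GL (Fin n) ℂ) : Matrix (Fin n) (Fin n) ℂ) i j • MvPolynomial.X j

/-- A `G`-equivariant module over `A = ℂ[x₁,…,xₙ]` on the ℂ-vector space `F`. -/
structure GMod (n : ℕ) (G : Subgroup (GL (Fin n) ℂ)) (F : Type)
    [AddCommGroup F] [Module ℂ F] : Type where
  actA : MvPolynomial (Fin n) ℂ →ₐ[ℂ] Module.End ℂ F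
  actG : G →* (F ≃ₗ[ℂ] F)
  equivariance : ∀ (g : G) (f : MvPolynomial (Fin n) ℂ) (v : F),
    actG g (actA f v) = actA (polyAct (g : GL (Fin n) ℂ) f) (actG g v)

/-- The irreducible complex characters of `G`. -/
def IrrChar {n : ℕ} (G : Subgroup (GL (Fin n) ℂ)) : Type :=
  {χ : G → ℂ // ∃ V : FDRep ℂ G, Simple V ∧ ∀ g : G, FDRep.character V g = χ g}

/-- The multiplicity `m_ρ` of the irreducible character `ρ` in a character `χ`,
computed by the usual inner product of characters. -/
def multChar {n : ℕ} {G : Subgroup (GL (Fin n) ℂ)} (ρ : IrrChar G) (χ : G → ℂ) : ℂ :=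
  (Nat.card G : ℂ)⁻¹ * ∑ᶠ g : G, ρ.1 g⁻¹ * χ g

/-- `θ(E) = Σ_ρ m_ρ(E)·θ(ρ)`, computed from the character of `E`. -/
def thetaOfChar {n : ℕ} {G : Subgroup (GL (Fin n) ℂ)}
    (θ : IrrChar G → ℚ) (χ : G → ℂ) : ℂ :=
  ∑ᶠ ρ : IrrChar G, multChar ρ χ * (θ ρ : ℂ)

/-- `θ ∈ Θ`, i.e. `Σ_ρ (dim ρ)·θ(ρ) = 0` (note `dim ρ = ρ(1)`). -/
def IsThetaParam {n : ℕ} (G : Subgroup (GL (Fin n) ℂ)) (θ : IrrChar G → ℚ) : Prop :=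
  ∑ᶠ ρ : IrrChar G, ρ.1 1 * (θ ρ : ℂ) = 0

/-- `θ ∈ Θ₊`, i.e. `θ ∈ Θ` and `θ(ρ) > 0` for every nontrivial `ρ ∈ Irr(G)`. -/
def IsThetaPlus {n : ℕ} (G : Subgroup (GL (Fin n) ℂ)) (θ : IrrChar G → ℚ) : Prop :=
  IsThetaParam G θ ∧ ∀ ρ : IrrChar G, ρ.1 ≠ (fun _ => (1 : ℂ)) → 0 < θ ρ

namespace GMod

variable {n : ℕ} {G : Subgroup (GL (Fin n) ℂ)} {F F' : Type}
  [AddCommGroup F] [Module ℂ F] [AddCommGroup F'] [Module ℂ F']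

/-- The character of the `G`-representation `F`. -/
def char (M : GMod n G F) : G → ℂ :=
  fun g => LinearMap.trace ℂ F ↑(M.actG g)

/-- `E` is a `G`-submodule: a subspace stable under the `A`-action and the `G`-action. -/
def IsSub (M : GMod n G F) (E : Submodule ℂ F) : Prop :=
  (∀ (f : MvPolynomial (Fin n) ℂ) (v : F), v ∈ E → M.actA f v ∈ E) ∧
  (∀ (g : G) (v : F), v ∈ E → M.actG g v ∈ E)

/-- The character of the `G`-representation on a `G`-stable subspace `E`. -/
def subChar (M : GMod n G F) (E : Submodule ℂ F)
    (h : ∀ (g : G) (v : F), v ∈ E → M.actG g v ∈ E) : G → ℂ :=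
  fun g => LinearMap.trace ℂ E
    ((↑(M.actG g) : F →ₗ[ℂ] F).restrict (p := E) (q := E) (fun v hv => by exact h g v hv))

/-- `F` is a `G`-constellation: finite dimensional and isomorphic as a `ℂ[G]`-module
to the regular representation `Map(G,ℂ)` (with `(g·φ)(h) = φ(g⁻¹h)`). -/
def IsConstellation (M : GMod n G F) : Prop :=
  FiniteDimensional ℂ F ∧
  ∃ e : F ≃ₗ[ℂ] (G → ℂ), ∀ (g : G) (v : F) (h : G), e (M.actG g v) h = e v (g⁻¹ * h)

/-- `θ`-stability: `θ(E) > 0` for every `G`-submodule `0 ≠ E ≠ F`. -/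
def IsStable (M : GMod n G F) (θ : IrrChar G → ℚ) : Prop :=
  ∀ (E : Submodule ℂ F) (hE : M.IsSub E), E ≠ ⊥ → E ≠ ⊤ →
    0 < (thetaOfChar θ (M.subChar E hE.2)).re

/-- `θ`-semistability: `θ(E) ≥ 0` for every `G`-submodule `0 ≠ E ≠ F`. -/
def IsSemistable (M : GMod n G F) (θ : IrrChar G → ℚ) : Prop :=
  ∀ (E : Submodule ℂ F) (hE : M.IsSub E), E ≠ ⊥ → E ≠ ⊤ →
    0 ≤ (thetaOfChar θ (M.subChar E hE.2)).re

/-- The subspace `F^G` of `G`-invariant vectors. -/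
def invariants (M : GMod n G F) : Submodule ℂ F where
  carrier := {v | ∀ g : G, M.actG g v = v}
  add_mem' := by
    intro a b ha hb
    intro g
    rw [map_add, ha g, hb g]
  zero_mem' := by
    intro g
    rw [map_zero]
  smul_mem' := by
    intro c v hv
    intro g
    rw [map_smul, hv g]

/-- The `A`-submodule of `F` generated by a subset `s ⊆ F`. -/
def aspan (M : GMod n G F) (s : Set F) : Submodule ℂ F :=
  Submodule.span ℂ {w | ∃ (f : MvPolynomial (Fin n) ℂ) (v : F), v ∈ s ∧ w = M.actA f v}

end GMod

/-- `φ : F → F'` is simultaneously `A`-linear and `G`-equivariant. -/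
def IsGHom {n : ℕ} {G : Subgroup (GL (Fin n) ℂ)} {F F' : Type}
    [AddCommGroup F] [Module ℂ F] [AddCommGroup F'] [Module ℂ F']
    (M : GMod n G F) (M' : GMod n G F') (φ : F →ₗ[ℂ] F') : Prop :=
  (∀ (f : MvPolynomial (Fin n) ℂ) (v : F), φ (M.actA f v) = M'.actA f (φ v)) ∧
  (∀ (g : G) (v : F), φ (M.actG g v) = M'.actG g (φ v))

end
open CategoryTheory Module LinearMap
open scoped Classical

noncomputable section StabAux

namespace StabAux

variable {n : ℕ} {G : Subgroup (GL (Fin n) ℂ)}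

/-- stability of a subspace under a representation -/
def GStable {W : Type} [AddCommGroup W] [Module ℂ W] (ρ : Representation ℂ G W)
    (p : Submodule ℂ W) : Prop :=
  ∀ (g : G) (w : W), w ∈ p → ρ g w ∈ p

/-- restriction of a representation to a stable subspace -/
def resRep {W : Type} [AddCommGroup W] [Module ℂ W] (ρ : Representation ℂ G W)
    (p : Submodule ℂ W) (h : GStable ρ p) : Representation ℂ G p where
  toFun g := (ρ g).restrict (p := p) (q := p) (fun v hv => h g v hv)
  map_one' := by ext v; simp [LinearMap.restrict_apply]
  map_mul' g₁ g₂ := by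
    ext v
    simp [LinearMap.restrict_apply, Module.End.mul_apply]

@[simp] lemma resRep_apply {W : Type} [AddCommGroup W] [Module ℂ W] (ρ : Representation ℂ G W)
    (p : Submodule ℂ W) (h : GStable ρ p) (g : G) (v : p) :
    (resRep ρ p h g v : W) = ρ g (v : W) := rfl

variable [Fintype G]

lemma card_ne_zero : ((Fintype.card G : ℂ)) ≠ 0 := by
  exact_mod_cast Fintype.card_ne_zero

lemma multChar_aux (ρ : IrrChar G) (V W : FDRep ℂ G) [Simple V] [Simple W]
    (hVc : ∀ g : G, V.character g = ρ.1 g) (χ : G → ℂ)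
    (hWc : ∀ g : G, W.character g = χ g) :
    multChar ρ χ = if Nonempty (W ≅ V) then 1 else 0 := by
  haveI : Invertible ((Fintype.card G : ℂ)) := invertibleOfNonzero card_ne_zero
  haveI : Invertible ((Nat.card G : ℂ)) := invertibleOfNonzero (by rw [Nat.card_eq_fintype_card]; exact card_ne_zero)
  have h := FDRep.char_orthonormal (k := ℂ) (G := G) W V
  have h2 : (Fintype.card G : ℂ)⁻¹ * ∑ g : G, W.character g * V.character g⁻¹
      = if Nonempty (W ≅ V) then 1 else 0 := by
    convert h using 2 <;> simp [invOf_eq_inv, Nat.card_eq_fintype_card]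
  rw [multChar, finsum_eq_sum_of_fintype, Nat.card_eq_fintype_card, ← h2]
  congr 1
  apply Finset.sum_congr rfl
  intro g _
  rw [← hVc g⁻¹, ← hWc g, mul_comm]

/-- the delta lemma: multiplicity of one irreducible character in another -/
lemma multChar_delta (ρ σ : IrrChar G) : multChar ρ σ.1 = if ρ = σ then 1 else 0 := by
  obtain ⟨V, hVs, hVc⟩ := ρ.2
  obtain ⟨W, hWs, hWc⟩ := σ.2
  haveI := hVs; haveI := hWs
  rw [multChar_aux ρ V W hVc σ.1 hWc]
  by_cases hiso : Nonempty (W ≅ V)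
  · rw [if_pos hiso]
    have hc : σ.1 = ρ.1 := by
      funext g
      rw [← hVc g, ← hWc g, FDRep.char_iso hiso.some]
    exact (if_pos ((Subtype.ext hc).symm : ρ = σ)).symm
  · rw [if_neg hiso]
    have hne : ρ ≠ σ := by
      intro hrs
      have h1 : multChar ρ σ.1 = 0 := by
        rw [multChar_aux ρ V W hVc σ.1 hWc, if_neg hiso]
      have h2 : multChar ρ σ.1 = 1 := by
        rw [multChar_aux ρ V V hVc σ.1 (fun g => by rw [hVc g, hrs]),
          if_pos ⟨Iso.refl V⟩]
      rw [h1] at h2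
      exact zero_ne_one h2
    exact (if_neg (fun h => hne h)).symm

end StabAux
namespace StabAux

variable {n : ℕ} {G : Subgroup (GL (Fin n) ℂ)}

lemma fgmod_mono_injective {X Y : FGModuleCat.{0} ℂ} (f : X ⟶ Y) [Mono f] :
    Function.Injective f := by
  intro x y hxy
  let g₁ : FGModuleCat.of ℂ ℂ ⟶ X := ConcreteCategory.ofHom (LinearMap.toSpanSingleton ℂ _ x)
  let g₂ : FGModuleCat.of ℂ ℂ ⟶ X := ConcreteCategory.ofHom (LinearMap.toSpanSingleton ℂ _ y)
  have : g₁ ≫ f = g₂ ≫ f := by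
    apply ConcreteCategory.hom_ext
    intro c
    show f (g₁ c) = f (g₂ c)
    show f (c • x) = f (c • y)
    rw [map_smul, map_smul, hxy]
  have hg := (cancel_mono f).mp this
  have h1 : g₁ (show ↑(FGModuleCat.of ℂ ℂ) from (1 : ℂ)) = x := one_smul ℂ x
  have h2 : g₂ (show ↑(FGModuleCat.of ℂ ℂ) from (1 : ℂ)) = y := one_smul ℂ y
  rw [hg] at h1
  exact h1.symm.trans h2

/-- an irreducible representation gives a simple object of `FDRep` -/
lemma simple_of_irreducible {W : Type} [AddCommGroup W] [Module ℂ W]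
    [FiniteDimensional ℂ W] [Nontrivial W] (ρ : Representation ℂ G W)
    (hirr : ∀ p : Submodule ℂ W, GStable ρ p → p = ⊥ ∨ p = ⊤) :
    Simple (FDRep.of ρ) := by
  constructor
  intro Y f hf
  constructor
  · intro hiso h0
    have h1 : (𝟙 (FDRep.of ρ) : _ ⟶ _) = 0 :=
      (IsIso.inv_hom_id f).symm.trans
        ((congrArg (fun g => inv f ≫ g) h0).trans (Limits.comp_zero))
    have h2 := congrArg (fun (h : FDRep.of ρ ⟶ FDRep.of ρ) => h.hom) h1
    obtain ⟨w, w', hw⟩ := exists_pair_ne W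
    apply hw
    have h3 : ∀ v : W, v = 0 := by
      intro v
      have := congrArg (fun (ψ : (FDRep.of ρ).V ⟶ (FDRep.of ρ).V) => ψ v) h2
      exact this
    rw [h3 w, h3 w']
  · intro hne
    haveI : Mono f.hom := (Action.forget (FGModuleCat ℂ) (MonCat.of G)).map_mono f
    have hinj : Function.Injective f.hom := fgmod_mono_injective f.hom
    have hrange : GStable ρ (LinearMap.range (f.hom.hom.hom : Y.V →ₗ[ℂ] W)) := by
      rintro g w ⟨y, rfl⟩
      refine ⟨Y.ρ g y, ?_⟩
      have := congrArg (fun (ψ : Y.V ⟶ (FDRep.of ρ).V) => ψ y) (f.comm g)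
      exact this
    rcases hirr _ hrange with hbot | htop
    · exfalso
      apply hne
      apply Action.hom_ext
      apply FGModuleCat.hom_ext
      apply LinearMap.ext
      intro y
      have : f.hom y ∈ LinearMap.range (f.hom.hom.hom : Y.V →ₗ[ℂ] W) := ⟨y, rfl⟩
      rw [hbot] at this
      exact this
    · have hsurj : Function.Surjective f.hom := by
        intro w
        have : w ∈ LinearMap.range (f.hom.hom.hom : Y.V →ₗ[ℂ] W) := by rw [htop]; trivial
        exact this
      let e := LinearEquiv.ofBijective (f.hom.hom.hom : Y.V →ₗ[ℂ] W) ⟨hinj, hsurj⟩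
      haveI : IsIso f.hom := by
        refine ⟨FGModuleCat.ofHom e.symm.toLinearMap, ?_, ?_⟩
        · apply FGModuleCat.hom_ext; apply LinearMap.ext; intro y
          show e.symm (f.hom y) = y
          exact e.symm_apply_apply y
        · apply FGModuleCat.hom_ext; apply LinearMap.ext; intro w
          show f.hom (e.symm w) = w
          exact e.apply_symm_apply w
      infer_instance

end StabAux
namespace StabAux

variable {n : ℕ} {G : Subgroup (GL (Fin n) ℂ)}

/-- Maschke: every `G`-stable subspace has a `G`-stable complement. -/
lemma exists_gstable_compl [Fintype G] {W : Type} [AddCommGroup W] [Module ℂ W]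
    (ρ : Representation ℂ G W) (p : Submodule ℂ W) (hp : GStable ρ p) :
    ∃ q : Submodule ℂ W, GStable ρ q ∧ IsCompl p q := by
  obtain ⟨q₀, hq₀⟩ := Submodule.exists_isCompl p
  set π₀ : W →ₗ[ℂ] p := p.linearProjOfIsCompl q₀ hq₀ with hπ₀
  set T : G → (W →ₗ[ℂ] p) :=
    fun g => (resRep ρ p hp g).comp (π₀.comp (ρ g⁻¹)) with hT
  set π : W →ₗ[ℂ] p := (Fintype.card G : ℂ)⁻¹ • ∑ g : G, T g with hπ
  have hfix : ∀ x : p, π x = x := by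
    intro x
    have hTx : ∀ g : G, T g (x : W) = x := by
      intro g
      have hmem : ρ g⁻¹ (x : W) ∈ p := hp g⁻¹ x x.2
      have h1 : π₀ (ρ g⁻¹ (x : W)) = ⟨ρ g⁻¹ (x : W), hmem⟩ :=
        Submodule.linearProjOfIsCompl_apply_left hq₀ ⟨ρ g⁻¹ (x : W), hmem⟩
      rw [hT]
      simp only [LinearMap.comp_apply, h1]
      apply Subtype.ext
      rw [resRep_apply]
      show ρ g (ρ g⁻¹ (x : W)) = (x : W)
      rw [← Module.End.mul_apply, ← map_mul, mul_inv_cancel, map_one, Module.End.one_apply]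
    rw [hπ]
    simp only [LinearMap.smul_apply, LinearMap.sum_apply]
    rw [Finset.sum_congr rfl (fun g _ => hTx g)]
    rw [Finset.sum_const, Finset.card_univ, ← Nat.cast_smul_eq_nsmul ℂ, smul_smul,
      inv_mul_cancel₀ card_ne_zero, one_smul]
  have hequiv : ∀ (h : G) (w : W), π (ρ h w) = resRep ρ p hp h (π w) := by
    intro h w
    have key : ∀ g : G, T g (ρ h w) = resRep ρ p hp h (T (h⁻¹ * g) w) := by
      intro g
      have e1 : ρ g⁻¹ ((ρ h) w) = ρ (h⁻¹ * g)⁻¹ w := by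
        rw [← Module.End.mul_apply, ← map_mul]
        rw [mul_inv_rev, inv_inv]
      have e2 : ∀ z : p, (ρ h) ((ρ (h⁻¹ * g)) (z : W)) = ρ g (z : W) := by
        intro z
        rw [← Module.End.mul_apply, ← map_mul]
        congr 1
        group
      apply Subtype.ext
      show ρ g ((π₀ (ρ g⁻¹ ((ρ h) w)) : W))
          = ρ h ((ρ (h⁻¹ * g)) ((π₀ (ρ (h⁻¹ * g)⁻¹ w) : W)))
      rw [e1, e2]
    rw [hπ]
    simp only [LinearMap.smul_apply, LinearMap.sum_apply]
    rw [Finset.sum_congr rfl (fun g _ => key g)]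
    rw [map_smul, map_sum]
    congr 1
    exact Fintype.sum_equiv (Equiv.mulLeft h⁻¹) _ _ (fun g => rfl)
  refine ⟨LinearMap.ker π, ?_, LinearMap.isCompl_of_proj hfix⟩
  intro g w hw
  have hw0 : π w = 0 := hw
  show π (ρ g w) = 0
  rw [hequiv g w, hw0, map_zero]

/-- trace additivity over a complementary pair of invariant subspaces -/
lemma trace_eq_of_isCompl {W : Type} [AddCommGroup W] [Module ℂ W] [FiniteDimensional ℂ W]
    {p q : Submodule ℂ W} (h : IsCompl p q) (f : W →ₗ[ℂ] W)
    (hp : Set.MapsTo f p p) (hq : Set.MapsTo f q q) :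
    LinearMap.trace ℂ W f
      = LinearMap.trace ℂ p (f.restrict hp) + LinearMap.trace ℂ q (f.restrict hq) := by
  have hint : DirectSum.IsInternal (fun b : Bool => cond b p q) :=
    (DirectSum.isInternal_submodule_iff_isCompl (fun b : Bool => cond b p q)
      (i := true) (j := false) (by decide)
      (by ext b; cases b <;> simp)).mpr h
  have := LinearMap.trace_eq_sum_trace_restrict hint
    (f := f) (fun b => by cases b <;> assumption)
  rw [this, Fintype.sum_bool]
  rfl

end StabAux
namespace StabAux

variable {n : ℕ} {G : Subgroup (GL (Fin n) ℂ)}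

/-- every finite-dimensional representation decomposes, at the level of characters,
into a multiset of irreducible characters -/
lemma exists_decomp [Fintype G] (m : ℕ) :
    ∀ (W : Type) [AddCommGroup W] [Module ℂ W] [FiniteDimensional ℂ W],
      finrank ℂ W ≤ m → ∀ ρ : Representation ℂ G W,
      ∃ s : Multiset (IrrChar G),
        ∀ g : G, LinearMap.trace ℂ W (ρ g) = (s.map (fun σ => σ.1 g)).sum := by
  induction m with
  | zero =>
    intro W _ _ _ hr ρ
    haveI : Subsingleton W := by
      rw [Nat.le_zero] at hr
      exact Module.finrank_zero_iff.mp hr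
    refine ⟨0, fun g => ?_⟩
    have h0 : ρ g = 0 := Subsingleton.elim _ _
    rw [h0, map_zero]
    simp
  | succ m ih =>
    intro W _ _ _ hr ρ
    by_cases hle : finrank ℂ W ≤ m
    · exact ih W hle ρ
    push_neg at hle
    haveI : Nontrivial W :=
      Module.finrank_pos_iff.mp (lt_of_le_of_lt (Nat.zero_le m) hle)
    set S : Set ℕ := {k | ∃ p : Submodule ℂ W, GStable ρ p ∧ p ≠ ⊥ ∧ finrank ℂ p = k} with hS
    have htb : (⊤ : Submodule ℂ W) ≠ ⊥ := by
      intro h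
      obtain ⟨x, hx⟩ := exists_ne (0 : W)
      exact hx ((Submodule.eq_bot_iff ⊤).mp h x trivial)
    have hStop : finrank ℂ W ∈ S :=
      ⟨⊤, fun g w _ => Submodule.mem_top, htb, finrank_top ℂ W⟩
    obtain ⟨p, hpst, hpne, hpr⟩ := Nat.sInf_mem (⟨_, hStop⟩ : S.Nonempty)
    have hmin : ∀ q : Submodule ℂ W, GStable ρ q → q ≠ ⊥ → finrank ℂ p ≤ finrank ℂ q := by
      intro q hq hqne
      rw [hpr]
      exact Nat.sInf_le ⟨q, hq, hqne, rfl⟩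
    haveI : Nontrivial ↥p := Submodule.nontrivial_iff_ne_bot.mpr hpne
    have hirr : ∀ q : Submodule ℂ ↥p, GStable (resRep ρ p hpst) q → q = ⊥ ∨ q = ⊤ := by
      intro q hqst
      by_cases hq : q = ⊥
      · exact Or.inl hq
      right
      have hmapst : GStable ρ (q.map p.subtype) := by
        rintro g w ⟨x, hxq, rfl⟩
        exact ⟨resRep ρ p hpst g x, hqst g x hxq, rfl⟩
      have hmapne : q.map p.subtype ≠ ⊥ := by
        intro hbot
        apply hq
        apply Submodule.map_injective_of_injective p.injective_subtype
        rw [hbot, Submodule.map_bot]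
      have h1 : finrank ℂ p ≤ finrank ℂ (q.map p.subtype) := hmin _ hmapst hmapne
      rw [Submodule.finrank_map_subtype_eq] at h1
      exact Submodule.eq_top_of_finrank_eq (le_antisymm (Submodule.finrank_le q) h1)
    haveI hsimple : Simple (FDRep.of (resRep ρ p hpst)) :=
      simple_of_irreducible (resRep ρ p hpst) hirr
    set σ₀ : IrrChar G :=
      ⟨fun g => FDRep.character (FDRep.of (resRep ρ p hpst)) g,
        ⟨FDRep.of (resRep ρ p hpst), hsimple, fun g => rfl⟩⟩ with hσ₀
    obtain ⟨q, hqst, hcompl⟩ := exists_gstable_compl ρ p hpst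
    have hsum := Submodule.finrank_add_eq_of_isCompl hcompl
    have hppos : 0 < finrank ℂ p := Module.finrank_pos_iff.mpr ‹Nontrivial ↥p›
    have hqle : finrank ℂ q ≤ m := by omega
    obtain ⟨s, hs⟩ := ih ↥q hqle (resRep ρ q hqst)
    refine ⟨σ₀ ::ₘ s, fun g => ?_⟩
    have htr := trace_eq_of_isCompl hcompl (ρ g)
      (fun w hw => hpst g w hw) (fun w hw => hqst g w hw)
    rw [Multiset.map_cons, Multiset.sum_cons, htr, ← hs g]
    congr 1
end StabAux
namespace StabAux

variable {n : ℕ} {G : Subgroup (GL (Fin n) ℂ)}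

/-- the character function determined by a multiset of irreducible characters -/
def sumChar (s : Multiset (IrrChar G)) : G → ℂ :=
  fun g => (s.map (fun σ => σ.1 g)).sum

lemma sumChar_cons (σ : IrrChar G) (s : Multiset (IrrChar G)) (g : G) :
    sumChar (σ ::ₘ s) g = σ.1 g + sumChar s g := by
  simp [sumChar]

lemma multChar_add [Fintype G] (ρ : IrrChar G) (χ₁ χ₂ : G → ℂ) :
    multChar ρ (fun g => χ₁ g + χ₂ g) = multChar ρ χ₁ + multChar ρ χ₂ := by
  simp only [multChar, finsum_eq_sum_of_fintype, mul_add, Finset.sum_add_distrib, mul_add]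

lemma multChar_sumChar [Fintype G] (ρ : IrrChar G) (s : Multiset (IrrChar G)) :
    multChar ρ (sumChar s) = (s.count ρ : ℂ) := by
  induction s using Multiset.induction_on with
  | empty =>
    simp [multChar, sumChar, finsum_eq_sum_of_fintype]
  | cons σ t ih =>
    have : sumChar (σ ::ₘ t) = fun g => σ.1 g + sumChar t g := by
      funext g; exact sumChar_cons σ t g
    rw [this, multChar_add, ih, multChar_delta, Multiset.count_cons]
    by_cases h : ρ = σ
    · simp [h, add_comm]
    · have h' : ¬ σ = ρ := fun hh => h hh.symm
      simp [h, h']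

/-- the dimension of an irreducible character is a positive natural number -/
lemma irrChar_one (ρ : IrrChar G) : ∃ d : ℕ, 0 < d ∧ ρ.1 1 = (d : ℂ) := by
  obtain ⟨V, hVs, hVc⟩ := ρ.2
  haveI := hVs
  refine ⟨finrank ℂ V, ?_, by rw [← hVc 1, FDRep.char_one]⟩
  by_contra h0
  push_neg at h0
  rw [Nat.le_zero] at h0
  haveI hss : Subsingleton V := Module.finrank_zero_iff.mp h0
  apply CategoryTheory.id_nonzero V
  apply Action.hom_ext
  apply FGModuleCat.hom_ext; apply LinearMap.ext
  intro v
  exact Subsingleton.elim (α := V) _ _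

/-- `thetaOfChar` of a `sumChar` is the sum of the values of `θ` -/
lemma thetaOfChar_sumChar [Fintype G] [Finite (IrrChar G)] (θ : IrrChar G → ℚ)
    (s : Multiset (IrrChar G)) :
    thetaOfChar θ (sumChar s) = (s.map (fun σ => (θ σ : ℂ))).sum := by
  induction s using Multiset.induction_on with
  | empty =>
    have hz : ∀ ρ : IrrChar G, multChar ρ (sumChar (0 : Multiset (IrrChar G))) * (θ ρ : ℂ) = 0 := by
      intro ρ
      have h0 : multChar ρ (sumChar (0 : Multiset (IrrChar G))) = 0 := by
        simp [multChar, sumChar, finsum_eq_sum_of_fintype]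
      rw [h0, zero_mul]
    rw [thetaOfChar, finsum_congr hz, finsum_zero]
    simp
  | cons σ t ih =>
    have hf : ∀ χ : G → ℂ, (Function.support fun ρ : IrrChar G => multChar ρ χ * (θ ρ : ℂ))
        |>.Finite := fun χ => Set.toFinite _
    have h1 : thetaOfChar θ (sumChar (σ ::ₘ t))
        = (∑ᶠ ρ : IrrChar G, multChar ρ σ.1 * (θ ρ : ℂ)) + thetaOfChar θ (sumChar t) := by
      simp only [thetaOfChar]
      rw [← finsum_add_distrib (Set.toFinite _) (Set.toFinite _)]
      apply finsum_congr
      intro ρ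
      have : sumChar (σ ::ₘ t) = fun g => σ.1 g + sumChar t g := by
        funext g; exact sumChar_cons σ t g
      rw [this, multChar_add, add_mul]
    have h2 : (∑ᶠ ρ : IrrChar G, multChar ρ σ.1 * (θ ρ : ℂ)) = (θ σ : ℂ) := by
      rw [finsum_eq_single _ σ]
      · rw [multChar_delta, if_pos rfl, one_mul]
      · intro ρ hρ
        rw [multChar_delta, if_neg hρ, zero_mul]
    rw [h1, h2, ih, Multiset.map_cons, Multiset.sum_cons]

end StabAux
namespace StabAux

variable {n : ℕ} {G : Subgroup (GL (Fin n) ℂ)}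

/-- the `G`-action of a `GMod` as a `Representation` -/
def gmodRep {F : Type} [AddCommGroup F] [Module ℂ F] (M : GMod n G F) :
    Representation ℂ G F where
  toFun g := (M.actG g : F →ₗ[ℂ] F)
  map_one' := by
    show (M.actG 1 : F →ₗ[ℂ] F) = 1
    rw [map_one]
    rfl
  map_mul' g h := by
    show (M.actG (g * h) : F →ₗ[ℂ] F) = _
    rw [map_mul]
    rfl

@[simp] lemma gmodRep_apply {F : Type} [AddCommGroup F] [Module ℂ F] (M : GMod n G F)
    (g : G) (v : F) : gmodRep M g v = M.actG g v := rfl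

/-- the character of a constellation is the regular character -/
lemma trace_regular [Fintype G] {F : Type} [AddCommGroup F] [Module ℂ F]
    (M : GMod n G F) (hcon : M.IsConstellation) (g : G) :
    LinearMap.trace ℂ F (gmodRep M g) = if g = 1 then (Fintype.card G : ℂ) else 0 := by
  haveI : FiniteDimensional ℂ F := hcon.1
  obtain ⟨e, he⟩ := hcon.2
  have hconj : gmodRep M g = (e.symm.conj) (LinearMap.funLeft ℂ ℂ (fun h => g⁻¹ * h)) := by
    apply LinearMap.ext
    intro v
    apply e.injective
    funext h
    have h1 : e (gmodRep M g v) h = e v (g⁻¹ * h) := he g v h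
    have h2 : e ((e.symm.conj) (LinearMap.funLeft ℂ ℂ (fun h => g⁻¹ * h)) v) h
        = e v (g⁻¹ * h) := by
      rw [LinearEquiv.conj_apply]
      simp only [LinearMap.coe_comp, Function.comp_apply, LinearEquiv.coe_coe,
        LinearEquiv.symm_symm, LinearEquiv.apply_symm_apply]
      rfl
    rw [h1, h2]
  rw [hconj, LinearMap.trace_conj']
  rw [LinearMap.trace_eq_matrix_trace ℂ (Pi.basisFun ℂ G), Matrix.trace]
  have hdiag : ∀ i : G, ((LinearMap.toMatrix (Pi.basisFun ℂ G) (Pi.basisFun ℂ G))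
      (LinearMap.funLeft ℂ ℂ (fun h => g⁻¹ * h))).diag i = if g = 1 then 1 else 0 := by
    intro i
    rw [Matrix.diag_apply, LinearMap.toMatrix_apply, Pi.basisFun_repr, Pi.basisFun_apply,
      LinearMap.funLeft_apply, Pi.single_apply]
    have : (g⁻¹ * i = i) = (g = 1) := by
      rw [mul_eq_right, inv_eq_one]
    simp only [this]
  rw [Finset.sum_congr rfl (fun i _ => hdiag i)]
  by_cases hg : g = 1 <;> simp [hg, Finset.card_univ]

lemma multChar_regular [Fintype G] (ρ : IrrChar G) (χ : G → ℂ)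
    (hχ : ∀ g : G, χ g = if g = 1 then (Fintype.card G : ℂ) else 0) :
    multChar ρ χ = ρ.1 1 := by
  rw [multChar, finsum_eq_sum_of_fintype, Nat.card_eq_fintype_card]
  rw [Finset.sum_congr rfl (fun g _ => by rw [hχ g])]
  rw [Finset.sum_eq_single 1]
  · rw [if_pos rfl, inv_one]
    field_simp
  · intro b _ hb
    rw [if_neg hb, mul_zero]
  · intro h
    exact absurd (Finset.mem_univ 1) h

/-- the main characterization: `θ`-stability for `θ ∈ Θ₊` is equivalent to the
`θ`-independent condition that no proper nonzero `G`-submodule contains a copy of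
the trivial representation. -/
lemma stable_iff_cond [Fintype G] {F : Type} [AddCommGroup F] [Module ℂ F]
    (M : GMod n G F) (hcon : M.IsConstellation) {θ : IrrChar G → ℚ}
    (hθ : IsThetaPlus G θ) :
    M.IsStable θ ↔ ∀ (E : Submodule ℂ F) (hE : M.IsSub E), E ≠ ⊥ → E ≠ ⊤ →
      ∀ ρ : IrrChar G, ρ.1 = (fun _ => (1:ℂ)) → multChar ρ (M.subChar E hE.2) = 0 := by
  haveI : FiniteDimensional ℂ F := hcon.1
  have hreg := trace_regular M hcon
  obtain ⟨sF, hsF⟩ := exists_decomp (finrank ℂ F) F le_rfl (gmodRep M)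
  have hmem : ∀ ρ : IrrChar G, ρ ∈ sF := by
    intro ρ
    rw [← Multiset.count_pos]
    by_contra hcp
    push_neg at hcp
    rw [Nat.le_zero] at hcp
    have h1 : multChar ρ (sumChar sF) = 0 := by
      rw [multChar_sumChar, hcp, Nat.cast_zero]
    have h2 : multChar ρ (sumChar sF) = ρ.1 1 :=
      multChar_regular ρ _ (fun g => by
        rw [show sumChar sF g = _ from (hsF g).symm, hreg g])
    obtain ⟨d, hd, hdeq⟩ := irrChar_one ρ
    rw [h2, hdeq] at h1
    exact hd.ne' (by exact_mod_cast h1)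
  haveI hfin : Finite (IrrChar G) := Finite.of_injective
    (fun ρ : IrrChar G => (⟨ρ, Multiset.mem_toFinset.mpr (hmem ρ)⟩ : {x // x ∈ sF.toFinset}))
    (fun a b hab => by simpa using congrArg Subtype.val hab)
  have hcast : ∀ s : Multiset (IrrChar G),
      (s.map (fun σ => (θ σ : ℂ))).sum = (((s.map (fun σ => θ σ)).sum : ℚ) : ℂ) := by
    intro s
    rw [show (((s.map (fun σ => θ σ)).sum : ℚ) : ℂ)
        = (Rat.castHom ℂ) (s.map (fun σ => θ σ)).sum from rfl,
      map_multiset_sum, Multiset.map_map]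
    rfl
  have hpos : ∀ s : Multiset (IrrChar G), s ≠ 0 → (∀ σ ∈ s, σ.1 ≠ (fun _ => (1:ℂ))) →
      0 < ((s.map (fun σ => θ σ)).sum : ℚ) := by
    intro s hs hschar
    obtain ⟨σ, hσ⟩ := Multiset.exists_mem_of_ne_zero hs
    obtain ⟨t, rfl⟩ := Multiset.exists_cons_of_mem hσ
    rw [Multiset.map_cons, Multiset.sum_cons]
    have h1 : 0 < θ σ := hθ.2 σ (hschar σ (Multiset.mem_cons_self σ t))
    have h2 : 0 ≤ (t.map (fun σ => θ σ)).sum := Multiset.sum_nonneg (by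
      intro x hx
      obtain ⟨τ, hτ, rfl⟩ := Multiset.mem_map.mp hx
      exact (hθ.2 τ (hschar τ (Multiset.mem_cons_of_mem hτ))).le)
    linarith
  have key : ∀ (E : Submodule ℂ F) (hE : M.IsSub E), E ≠ ⊥ → E ≠ ⊤ →
      ((∀ ρ : IrrChar G, ρ.1 = (fun _ => (1:ℂ)) → multChar ρ (M.subChar E hE.2) = 0) →
        0 < (thetaOfChar θ (M.subChar E hE.2)).re) ∧
      ((¬ ∀ ρ : IrrChar G, ρ.1 = (fun _ => (1:ℂ)) → multChar ρ (M.subChar E hE.2) = 0) →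
        (thetaOfChar θ (M.subChar E hE.2)).re < 0) := by
    intro E hE hEbot hEtop
    have hstE : GStable (gmodRep M) E := fun g v hv => hE.2 g v hv
    obtain ⟨sE, hsE⟩ := exists_decomp (finrank ℂ ↥E) ↥E le_rfl (resRep (gmodRep M) E hstE)
    have hsubE : M.subChar E hE.2 = sumChar sE := by
      funext g
      exact hsE g
    obtain ⟨E', hstE', hcompl⟩ := exists_gstable_compl (gmodRep M) E hstE
    obtain ⟨sE', hsE'⟩ := exists_decomp (finrank ℂ ↥E') ↥E' le_rfl (resRep (gmodRep M) E' hstE')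
    have hsplit : ∀ g : G, sumChar (sE + sE') g = LinearMap.trace ℂ F (gmodRep M g) := by
      intro g
      have htr := trace_eq_of_isCompl hcompl (gmodRep M g)
        (fun w hw => hstE g w hw) (fun w hw => hstE' g w hw)
      show ((sE + sE').map (fun σ => σ.1 g)).sum = _
      rw [Multiset.map_add, Multiset.sum_add, ← hsE g, ← hsE' g, htr]
      rfl
    have hcount : ∀ ρ : IrrChar G, ((sE + sE').count ρ : ℂ) = ρ.1 1 := by
      intro ρ
      rw [← multChar_sumChar]
      exact multChar_regular ρ _ (fun g => by rw [hsplit g, hreg g])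
    have hθF : (sE.map (fun σ => θ σ)).sum + (sE'.map (fun σ => θ σ)).sum = 0 := by
      have h0 : thetaOfChar θ (sumChar (sE + sE')) = 0 := by
        have h1 : thetaOfChar θ (sumChar (sE + sE'))
            = ∑ᶠ ρ : IrrChar G, ρ.1 1 * (θ ρ : ℂ) := by
          rw [thetaOfChar]
          apply finsum_congr
          intro ρ
          rw [multChar_sumChar, hcount ρ]
        rw [h1]
        exact hθ.1
      rw [thetaOfChar_sumChar, Multiset.map_add, Multiset.sum_add,
        hcast sE, hcast sE'] at h0
      exact_mod_cast h0
    have hre : (thetaOfChar θ (M.subChar E hE.2)).re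
        = (((sE.map (fun σ => θ σ)).sum : ℚ) : ℝ) := by
      rw [hsubE, thetaOfChar_sumChar, hcast sE]
      exact Complex.ratCast_re _
    have hE'bot : E' ≠ ⊥ := by
      intro h0
      apply hEtop
      have hsup := hcompl.sup_eq_top
      rw [h0, sup_bot_eq] at hsup
      exact hsup
    have hne : ∀ (p : Submodule ℂ F), p ≠ ⊥ → ∀ (hstp : GStable (gmodRep M) p)
        (s : Multiset (IrrChar G)),
        (∀ g : G, LinearMap.trace ℂ ↥p ((resRep (gmodRep M) p hstp) g)
          = (s.map (fun σ => σ.1 g)).sum) → s ≠ 0 := by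
      intro p hpbot hstp s hs h0
      haveI : Nontrivial ↥p := Submodule.nontrivial_iff_ne_bot.mpr hpbot
      have h1 := hs 1
      rw [h0, map_one, LinearMap.trace_one] at h1
      simp only [Multiset.map_zero, Multiset.sum_zero] at h1
      have h2 : 0 < finrank ℂ ↥p := Module.finrank_pos_iff.mpr ‹_›
      exact h2.ne' (by exact_mod_cast h1)
    constructor
    · -- Cond → positive
      intro hC
      have hall : ∀ σ ∈ sE, σ.1 ≠ (fun _ => (1:ℂ)) := by
        intro σ hσ h1
        have h2 := hC σ h1
        rw [hsubE, multChar_sumChar] at h2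
        have h3 : 0 < sE.count σ := Multiset.count_pos.mpr hσ
        exact h3.ne' (by exact_mod_cast h2)
      have := hpos sE (hne E hEbot hstE sE hsE) hall
      rw [hre]
      exact_mod_cast this
    · -- ¬Cond → negative
      intro hC
      push_neg at hC
      obtain ⟨ρ, hρtriv, hρne⟩ := hC
      have hcnt1 : (sE + sE').count ρ = 1 := by
        have h1 := hcount ρ
        rw [hρtriv] at h1
        have h2 : (((sE + sE').count ρ : ℕ) : ℂ) = 1 := h1
        exact_mod_cast h2
      have hcntE : 0 < sE.count ρ := by
        rw [hsubE, multChar_sumChar] at hρne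
        exact Nat.pos_of_ne_zero (fun h => hρne (by rw [h, Nat.cast_zero]))
      have hcntE' : sE'.count ρ = 0 := by
        rw [Multiset.count_add] at hcnt1
        omega
      have hall' : ∀ σ ∈ sE', σ.1 ≠ (fun _ => (1:ℂ)) := by
        intro σ hσ h1
        have hσρ : σ = ρ := Subtype.ext (h1.trans hρtriv.symm)
        rw [hσρ] at hσ
        have := Multiset.count_pos.mpr hσ
        omega
      have hposE' := hpos sE' (hne E' hE'bot hstE' sE' hsE') hall'
      have hneg : ((sE.map (fun σ => θ σ)).sum : ℚ) < 0 := by linarith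
      rw [hre]
      exact_mod_cast hneg
  constructor
  · intro hstab E hE hEbot hEtop
    by_contra hC
    have h2 := (key E hE hEbot hEtop).2 hC
    have h1 := hstab E hE hEbot hEtop
    linarith
  · intro hC E hE hEbot hEtop
    exact (key E hE hEbot hEtop).1 (hC E hE hEbot hEtop)

end StabAux

end StabAux
/-- For any `θ, θ′ ∈ Θ₊`, a `G`-constellation is `θ`-stable if and only if
it is `θ′`-stable: all parameters in `Θ₊` determine the same stable objects. -/
theorem stmt2 {n : ℕ} {G : Subgroup (GL (Fin n) ℂ)} [Finite G]
    (θ θ' : IrrChar G → ℚ) (hθ : IsThetaPlus G θ) (hθ' : IsThetaPlus G θ')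
    {F : Type} [AddCommGroup F] [Module ℂ F] (M : GMod n G F)
    (hcon : M.IsConstellation) :
    M.IsStable θ ↔ M.IsStable θ' := by
  letI : Fintype G := Fintype.ofFinite G
  rw [StabAux.stable_iff_cond M hcon hθ, StabAux.stable_iff_cond M hcon hθ']
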